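/- Let P be a real polynomial of degree n ≥ 0 with all zeros (if any) in the open interval (0,1), let s < 0 and α > 0, and define P̂(x) = x(1-x)P'(x) + (x(s-α)+α)P(x). Then P̂ has degree n+1 and all n+1 zeros of P̂ are real and lie in (0,1). -/

import Mathlib

open Polynomial

theorem realroots (P : Polynomial ℝ) (hP0 : P ≠ 0)
    (hroots : ∀ z ∈ (P.map (algebraMap ℝ ℂ)).roots, z.im = 0 ∧ 0 < z.re ∧ z.re < 1) :
    P.roots.card = P.natDegree ∧ ∀ r ∈ P.roots, 0 < r ∧ r < 1 := by
  set f := algebraMap ℝ ℂ with hf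
  have hinj : Function.Injective f := (algebraMap ℝ ℂ).injective
  have hPm0 : P.map f ≠ 0 := (Polynomial.map_ne_zero_iff hinj).mpr hP0
  have hsp : (P.map f).Splits := IsAlgClosed.splits _
  have hcard : (P.map f).roots.card = (P.map f).natDegree :=
    (Polynomial.splits_iff_card_roots).mp hsp
  have hfac : P.map f = C (P.map f).leadingCoeff *
      ((P.map f).roots.map fun a => X - C a).prod := hsp.eq_prod_roots
  have hre : ((P.map f).roots.map fun a => X - C a) =
      (((P.map f).roots.map Complex.re).map fun r => Polynomial.map f (X - C r)) := by
    rw [Multiset.map_map]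
    apply Multiset.map_congr rfl
    intro z hz
    have h := (hroots z hz).1
    have : f z.re = z := by
      simp only [hf, Complex.coe_algebraMap]
      exact Complex.ext rfl (by simp [h])
    simp [this]
  have hlc : (P.map f).leadingCoeff = f P.leadingCoeff := leadingCoeff_map f
  -- P equals real polynomial
  set R : Multiset ℝ := (P.map f).roots.map Complex.re with hR
  have key : P = C P.leadingCoeff * (R.map fun r => X - C r).prod := by
    apply Polynomial.map_injective f hinj
    rw [hfac, hre, hlc, Polynomial.map_mul, Polynomial.map_C, Polynomial.map_multiset_prod,
      Multiset.map_map, Multiset.map_map, hR, Multiset.map_map]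
    rfl
  have hrootsP : P.roots = R := by
    rw [key, Polynomial.roots_C_mul _ (leadingCoeff_ne_zero.mpr hP0),
      Polynomial.roots_multiset_prod_X_sub_C]
  constructor
  · rw [hrootsP, hR, Multiset.card_map, hcard, Polynomial.natDegree_map_eq_of_injective hinj]
  · intro r hr
    rw [hrootsP, hR, Multiset.mem_map] at hr
    obtain ⟨z, hz, rfl⟩ := hr
    exact ⟨(hroots z hz).2.1, (hroots z hz).2.2⟩

theorem rolle_chain (g : ℝ → ℝ) (Q : Polynomial ℝ) (φ : ℝ → ℝ)
    (hcont : Continuous g)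
    (hderiv : ∀ x ∈ Set.Ioo (0:ℝ) 1, HasDerivAt g (φ x) x)
    (hφ : ∀ x ∈ Set.Ioo (0:ℝ) 1, φ x = 0 → Q.eval x = 0) :
    ∀ (l : List ℝ) (a : ℝ), 0 ≤ a → List.Chain (· < ·) a l → (∀ x ∈ l, x ≤ 1) →
      g a = 0 → (∀ x ∈ l, g x = 0) →
      ∃ S : List ℝ, S.length = l.length ∧ S.Chain' (· < ·) ∧
        (∀ c ∈ S, Q.eval c = 0 ∧ a < c ∧ (∃ b ∈ l, c < b)) ∧
        (∀ c ∈ S, ∀ t ∈ l, c ≠ t) := by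
  intro l
  induction l with
  | nil => intro a _ _ _ _ _; exact ⟨[], by simp, List.IsChain.nil, by simp, by simp⟩
  | cons b l' ih =>
    intro a ha0 hchain hle1 hga hgl
    replace hchain := List.isChain_cons_cons.mp hchain
    obtain ⟨hab, hchain'⟩ := hchain
    have hb1 : b ≤ 1 := hle1 b (by simp)
    have hgb : g b = 0 := hgl b (by simp)
    obtain ⟨c, hc, hφc⟩ := exists_hasDerivAt_eq_zero hab (hcont.continuousOn)
      (by rw [hga, hgb])
      (fun x hx => hderiv x ⟨lt_of_le_of_lt ha0 hx.1, lt_of_lt_of_le hx.2 hb1⟩)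
    have hcIoo : c ∈ Set.Ioo (0:ℝ) 1 := ⟨lt_of_le_of_lt ha0 hc.1, lt_of_lt_of_le hc.2 hb1⟩
    have hQc : Q.eval c = 0 := hφ c hcIoo hφc
    obtain ⟨S', hlen, hch, hprop, hne⟩ := ih b ((ha0.trans hab.le))
      hchain' (fun x hx => hle1 x (by simp [hx])) hgb (fun x hx => hgl x (by simp [hx]))
    have hbS' : ∀ c' ∈ S', b < c' := fun c' hc' => (hprop c' hc').2.1
    refine ⟨c :: S', by simp [hlen], ?_, ?_, ?_⟩
    · refine List.isChain_cons.mpr ?_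
      exact ⟨fun y hy => hc.2.trans (hbS' y (List.mem_of_mem_head? hy)), hch⟩
    · intro c' hc'
      rcases List.mem_cons.mp hc' with rfl | hc'
      · exact ⟨hQc, hc.1, b, by simp, hc.2⟩
      · obtain ⟨hQ', hb', b', hb'l, hcb'⟩ := hprop c' hc'
        exact ⟨hQ', hab.trans hb', b', by simp [hb'l], hcb'⟩
    · intro c' hc' t ht
      rcases List.mem_cons.mp hc' with rfl | hc' <;> rcases List.mem_cons.mp ht with rfl | ht
      · exact ne_of_lt hc.2
      · -- c < b < t  (t ∈ l', chain from b)
        have : b < t := List.rel_of_pairwise_cons (List.isChain_iff_pairwise.mp hchain') ht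
        exact ne_of_lt (hc.2.trans this)
      · exact (ne_of_gt (hbS' c' hc'))
      · exact hne c' hc' t ht

theorem gfacts (P : Polynomial ℝ) (s α : ℝ) (hs : s < 0) (hα : 0 < α)
    (Q : Polynomial ℝ)
    (hQ : Q = X * (1 - X) * P.derivative + (C (s - α) * X + C α) * P) :
    Continuous (fun x : ℝ => x ^ α * ((1 - x) ^ (-s) * P.eval x)) ∧
    (∀ x ∈ Set.Ioo (0:ℝ) 1, HasDerivAt (fun x : ℝ => x ^ α * ((1 - x) ^ (-s) * P.eval x))
      (x ^ (α - 1) * (1 - x) ^ (-s - 1) * Q.eval x) x) ∧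
    (∀ x ∈ Set.Ioo (0:ℝ) 1, x ^ (α - 1) * (1 - x) ^ (-s - 1) * Q.eval x = 0 → Q.eval x = 0) := by
  refine ⟨?_, ?_, ?_⟩
  · apply Continuous.mul
    · exact continuous_iff_continuousAt.mpr fun x =>
        Real.continuousAt_rpow_const x α (Or.inr hα.le)
    · apply Continuous.mul
      · exact (continuous_iff_continuousAt.mpr fun x =>
          Real.continuousAt_rpow_const x (-s) (Or.inr (by linarith))).comp
          (continuous_const.sub continuous_id)
      · exact P.continuous_aeval -- maybe wrong name
  · intro x hx
    obtain ⟨hx0, hx1⟩ := hx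
    have h1x : (0:ℝ) < 1 - x := by linarith
    have h1 : HasDerivAt (fun x : ℝ => x ^ α) (α * x ^ (α - 1)) x :=
      Real.hasDerivAt_rpow_const (Or.inl hx0.ne')
    have h2a : HasDerivAt (fun x : ℝ => 1 - x) (-1) x := by
      simpa using (hasDerivAt_id x).const_sub 1
    have h2 : HasDerivAt (fun x : ℝ => (1 - x) ^ (-s))
        ((-s) * (1 - x) ^ (-s - 1) * (-1)) x :=
      (Real.hasDerivAt_rpow_const (p := -s) (Or.inl h1x.ne')).comp x h2a
    have h3 : HasDerivAt (fun x : ℝ => P.eval x) (P.derivative.eval x) x := P.hasDerivAt x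
    have := h1.mul (h2.mul h3)
    refine this.congr_deriv ?_
    have e1 : x ^ α = x ^ (α - 1) * x := by
      rw [← Real.rpow_add_one hx0.ne' (α - 1)]; congr 1; ring
    have e2 : (1 - x) ^ (-s) = (1 - x) ^ (-s - 1) * (1 - x) := by
      rw [← Real.rpow_add_one h1x.ne' (-s - 1)]; congr 1; ring
    rw [hQ]
    simp only [Pi.mul_apply, eval_add, eval_mul, eval_X, eval_sub, eval_one, eval_C, e1, e2]
    ring
  · intro x hx h
    obtain ⟨hx0, hx1⟩ := hx
    have p1 : (0:ℝ) < x ^ (α - 1) := Real.rpow_pos_of_pos hx0 _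
    have p2 : (0:ℝ) < (1 - x) ^ (-s - 1) := Real.rpow_pos_of_pos (by linarith) _
    by_contra hq
    exact (mul_ne_zero (mul_ne_zero p1.ne' p2.ne') hq) h

theorem degQ (n : ℕ) (P : Polynomial ℝ) (hP0 : P ≠ 0) (hdeg : P.natDegree = n)
    (s α : ℝ) (hs : s < 0) (hα : 0 < α) (Q : Polynomial ℝ)
    (hQ : Q = X * (1 - X) * P.derivative + (C (s - α) * X + C α) * P) :
    Q.natDegree = n + 1 := by
  have hc : P.coeff n ≠ 0 := by
    rw [← hdeg]; exact (leadingCoeff_ne_zero.mpr hP0)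
  have hb : Q.natDegree ≤ n + 1 := by
    rw [hQ]
    apply le_trans (natDegree_add_le _ _)
    apply max_le
    · rcases Nat.eq_zero_or_pos n with rfl | hn
      · have : P.derivative = 0 := by
          rw [Polynomial.eq_C_of_natDegree_eq_zero hdeg]; simp
        simp [this]
      · apply le_trans (natDegree_mul_le)
        have h1 : (X * (1 - X) : ℝ[X]).natDegree ≤ 2 := by compute_degree
        have h2 : P.derivative.natDegree ≤ n - 1 := hdeg ▸ natDegree_derivative_le P
        omega
    · apply le_trans (natDegree_mul_le)
      have h1 : (C (s - α) * X + C α : ℝ[X]).natDegree ≤ 1 := by compute_degree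
      omega
  have hcoeff : Q.coeff (n + 1) = (s - α - n) * P.coeff n := by
    have e : Q = X * P.derivative - X^2 * P.derivative + (C (s-α) * (X * P) + C α * P) := by
      rw [hQ]; ring
    have d1 : (X * P.derivative).coeff (n+1) = P.derivative.coeff n := coeff_X_mul _ _
    have d2 : P.derivative.coeff n = 0 := by
      rw [coeff_derivative]
      rw [coeff_eq_zero_of_natDegree_lt (by omega)]; ring
    have d3 : (X^2 * P.derivative).coeff (n+1) = (n : ℝ) * P.coeff n := by
      rcases Nat.eq_zero_or_pos n with rfl | hn
      · have : P.derivative = 0 := by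
          rw [Polynomial.eq_C_of_natDegree_eq_zero hdeg]; simp
        simp [this]
      · obtain ⟨m, rfl⟩ : ∃ m, n = m + 1 := ⟨n - 1, by omega⟩
        have : m + 1 + 1 = m + 2 := by ring
        rw [this, coeff_X_pow_mul, coeff_derivative]
        push_cast; ring
    rw [e]
    simp only [coeff_add, coeff_sub, d1, d2, d3, coeff_C_mul, coeff_X_mul,
      coeff_eq_zero_of_natDegree_lt (show P.natDegree < n + 1 by omega)]
    ring
  have hne : Q.coeff (n+1) ≠ 0 := by
    rw [hcoeff]
    apply mul_ne_zero _ hc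
    have : (0:ℝ) ≤ n := Nat.cast_nonneg n
    intro h; nlinarith
  exact natDegree_eq_of_le_of_coeff_ne_zero hb hne

theorem stmt_7 (n : ℕ) (P : Polynomial ℝ) (hP0 : P ≠ 0) (hdeg : P.natDegree = n)
    (hroots : ∀ z ∈ (P.map (algebraMap ℝ ℂ)).roots, z.im = 0 ∧ 0 < z.re ∧ z.re < 1)
    (s α : ℝ) (hs : s < 0) (hα : 0 < α)
    (Q : Polynomial ℝ)
    (hQ : Q = X * (1 - X) * P.derivative + (C (s - α) * X + C α) * P) :
    Q.natDegree = n + 1 ∧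
    ∃ z : Fin (n + 1) → ℝ, (∀ i, 0 < z i ∧ z i < 1) ∧
      Q = C Q.leadingCoeff * ∏ i, (X - C (z i)) := by
  obtain ⟨hcard, hIoo⟩ := realroots P hP0 hroots
  rw [hdeg] at hcard
  have hQdeg : Q.natDegree = n + 1 := degQ n P hP0 hdeg s α hs hα Q hQ
  have hQ0 : Q ≠ 0 := fun h => by simp [h] at hQdeg
  refine ⟨hQdeg, ?_⟩
  -- setup the chain of distinct roots
  set T : Finset ℝ := P.roots.toFinset with hT
  set lT : List ℝ := T.sort (· ≤ ·) with hlT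
  set l : List ℝ := lT ++ [1] with hl
  have hmemT : ∀ x ∈ lT, 0 < x ∧ x < 1 := by
    intro x hx
    exact hIoo x (Multiset.mem_toFinset.mp ((Finset.mem_sort (α := ℝ) (· ≤ ·)).mp hx))
  have hchain : List.Chain (· < ·) 0 l := by
    show List.IsChain _ (0 :: l); rw [List.isChain_iff_pairwise]
    have hpT : lT.Pairwise (· < ·) := (Finset.sortedLT_sort T).pairwise
    rw [List.pairwise_cons]
    constructor
    · intro x hx
      rw [hl, List.mem_append] at hx
      rcases hx with hx | hx
      · exact (hmemT x hx).1
      · simp at hx; rw [hx]; norm_num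
    · rw [hl, List.pairwise_append]
      refine ⟨hpT, by simp, ?_⟩
      intro x hx y hy
      simp at hy; rw [hy]
      exact (hmemT x hx).2
  have hle1 : ∀ x ∈ l, x ≤ 1 := by
    intro x hx
    rw [hl, List.mem_append] at hx
    rcases hx with hx | hx
    · exact (hmemT x hx).2.le
    · simp at hx; rw [hx]
  -- the auxiliary function g
  obtain ⟨hcont, hderiv, hφ⟩ := gfacts P s α hs hα Q hQ
  set g : ℝ → ℝ := fun x => x ^ α * ((1 - x) ^ (-s) * P.eval x) with hg
  have hg0 : g 0 = 0 := by
    simp [hg, Real.zero_rpow hα.ne']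
  have hgl : ∀ x ∈ l, g x = 0 := by
    intro x hx
    rw [hl, List.mem_append] at hx
    rcases hx with hx | hx
    · have : P.IsRoot x := isRoot_of_mem_roots
        (Multiset.mem_toFinset.mp ((Finset.mem_sort (α := ℝ) (· ≤ ·)).mp hx))
      simp [hg, this.eq_zero]
    · simp at hx; rw [hx]
      simp [hg, Real.zero_rpow (show -s ≠ 0 by linarith)]
  obtain ⟨S, hSlen, hSch, hSprop, hSne⟩ := rolle_chain g Q
    (fun x => x ^ (α - 1) * (1 - x) ^ (-s - 1) * Q.eval x) hcont hderiv hφ l 0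
    le_rfl hchain hle1 hg0 hgl
  have hSnodup : S.Nodup := (List.isChain_iff_pairwise.mp hSch).imp ne_of_lt
  have hSIoo : ∀ c ∈ S, 0 < c ∧ c < 1 := by
    intro c hc
    obtain ⟨_, h0c, b, hb, hcb⟩ := hSprop c hc
    exact ⟨h0c, lt_of_lt_of_le hcb (hle1 b hb)⟩
  have hSnotroot : ∀ c ∈ S, c ∉ P.roots := by
    intro c hc hmem
    have : c ∈ lT := (Finset.mem_sort (α := ℝ) (· ≤ ·)).mpr (Multiset.mem_toFinset.mpr hmem)
    exact hSne c hc c (by rw [hl, List.mem_append]; exact Or.inl this) rfl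
  -- the multiset of n+1 roots of Q
  have hTval : T.val = P.roots.dedup := rfl
  have hTle : T.val ≤ P.roots := hTval ▸ P.roots.dedup_le
  set M : Multiset ℝ := (P.roots - T.val) + (S : Multiset ℝ) with hM
  have hlenS : S.length = T.card + 1 := by
    rw [hSlen, hl, List.length_append, hlT, Finset.length_sort]
    rfl
  have hTcard : T.card ≤ n := by
    have := Multiset.card_le_card hTle
    rw [hcard] at this
    exact le_trans (le_of_eq rfl) this
  have hMcard : Multiset.card M = n + 1 := by
    rw [hM, Multiset.card_add, Multiset.card_sub hTle, hcard, Multiset.coe_card, hlenS]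
    have : Multiset.card T.val = T.card := rfl
    rw [this]
    omega
  have hMle : M ≤ Q.roots := by
    rw [Multiset.le_iff_count]
    intro x
    rw [count_roots, hM, Multiset.count_add, Multiset.count_sub, hTval, Multiset.count_dedup]
    by_cases hxS : x ∈ S
    · have h1 : Multiset.count x (S : Multiset ℝ) = 1 := Multiset.count_eq_one_of_mem hSnodup hxS
      have h2 : x ∉ P.roots := hSnotroot x hxS
      rw [h1, Multiset.count_eq_zero_of_notMem h2]
      have : 0 < Q.rootMultiplicity x := (rootMultiplicity_pos hQ0).mpr (hSprop x hxS).1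
      split <;> omega
    · have h1 : Multiset.count x (S : Multiset ℝ) = 0 :=
        Multiset.count_eq_zero_of_notMem hxS
      rw [h1, add_zero]
      split
      · -- x ∈ P.roots, multiplicity m, show m - 1 ≤ rootMultiplicity x Q
        rename_i hxR
        rw [count_roots]
        set m := P.rootMultiplicity x with hm
        have hdvd : (X - C x) ^ (m - 1) ∣ Q := by
          have hd1 : (X - C x) ^ (m - 1) ∣ P :=
            dvd_trans (pow_dvd_pow _ (Nat.sub_le m 1)) (P.pow_rootMultiplicity_dvd x)
          have hd2 : (X - C x) ^ (m - 1) ∣ P.derivative := by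
            apply dvd_trans (pow_dvd_pow _ (P.rootMultiplicity_sub_one_le_derivative_rootMultiplicity x))
            exact P.derivative.pow_rootMultiplicity_dvd x
          rw [hQ]
          exact dvd_add (hd2.mul_left _) (hd1.mul_left _)
        have h3 := (le_rootMultiplicity_iff hQ0).mpr hdvd
        exact h3
      · rename_i hxR
        rw [Multiset.count_eq_zero_of_notMem hxR]
        omega
  have hMeq : M = Q.roots := by
    apply Multiset.eq_of_le_of_card_le hMle
    rw [hMcard]
    exact le_trans Q.card_roots' (le_of_eq hQdeg)
  have hQroots_card : Multiset.card Q.roots = Q.natDegree := by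
    rw [← hMeq, hMcard, hQdeg]
  have hQIoo : ∀ x ∈ Q.roots, 0 < x ∧ x < 1 := by
    intro x hx
    rw [← hMeq, hM, Multiset.mem_add] at hx
    rcases hx with hx | hx
    · exact hIoo x (Multiset.mem_of_le (Multiset.sub_le_self _ _) hx)
    · exact hSIoo x hx
  have hsplit := C_leadingCoeff_mul_prod_multiset_X_sub_C hQroots_card
  -- package into Fin (n+1)
  set L : List ℝ := Q.roots.toList with hLdef
  have hL : Q.roots = (L : Multiset ℝ) := (Q.roots.coe_toList).symm
  have hlenL : L.length = n + 1 := by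
    rw [hLdef, Multiset.length_toList, hQroots_card, hQdeg]
  refine ⟨fun i => L.get (Fin.cast hlenL.symm i), ?_, ?_⟩
  · intro i
    apply hQIoo
    rw [hL]
    exact List.get_mem L _
  · have h1 : L.map (fun a => X - C a) = List.ofFn (fun j : Fin L.length => X - C (L.get j)) := by
      conv_lhs => rw [← List.ofFn_get L]
      rw [List.map_ofFn]
      rfl
    have hprod : (Multiset.map (fun a => X - C a) Q.roots).prod
        = ∏ i : Fin (n+1), (X - C (L.get (Fin.cast hlenL.symm i))) := by
      rw [hL, Multiset.map_coe, Multiset.prod_coe, h1, List.prod_ofFn]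
      exact (Equiv.prod_comp (finCongr hlenL.symm)
        (fun j : Fin L.length => X - C (L.get j))).symm
    conv_lhs => rw [← hsplit]
    rw [hprod]
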